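/- Let (S, R, E, F) be a solution of Model (2) on [0,∞) with nonnegative initial values, with m1 > 0 and 0 < η ≤ 1, and suppose S(t) ≥ 0, R(t) ≥ 0, E(t) ≥ 0 for all t ≥ 0 (which holds by Proposition 2). If S(0) + η·R(0) ≤ 1/m1, then S(t) + η·R(t) ≤ 1/m1 for all t ≥ 0; in particular S and R are bounded above on [0,∞). -/

import Mathlib

/-- Forward invariance of the region {S + η·R ≤ 1/m1} for Model (2)
(m1 > 0, 0 < η ≤ 1): if S(0) + η·R(0) ≤ 1/m1 then S(t) + η·R(t) ≤ 1/m1 for all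
t ≥ 0; in particular S and R are bounded above on [0,∞). -/
theorem model2_weighted_tumor_bounded
    (k1 k2 k3 m1 m2 r μ α c η a1 a2 a3 p : ℝ) (l : ℕ)
    (hk1 : 0 ≤ k1) (hk2 : 0 ≤ k2) (hk3 : 0 ≤ k3) (hm1 : 0 < m1) (hm2 : 0 ≤ m2)
    (hr : 0 ≤ r) (hμ : 0 ≤ μ) (hα : 0 ≤ α) (hc : 0 ≤ c) (hη : 0 < η)
    (ha1 : 0 < a1) (ha2 : 0 < a2) (ha3 : 0 < a3) (hp0 : 0 < p) (hp1 : p ≤ 1)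
    (hl : 1 ≤ l)
    (S R E F : ℝ → ℝ)
    (hS : Differentiable ℝ S) (hR : Differentiable ℝ R)
    (hE : Differentiable ℝ E) (hF : Differentiable ℝ F)
    (hS' : ∀ t ≥ (0:ℝ), deriv S t =
      (k1 * E t / (a1 + E t)) * S t * (1 - m1 * (S t + η * R t))
        - (c * a2 ^ l / (a2 ^ l + E t ^ l)) * S t
        - (c * a3 ^ l / (a3 ^ l + E t ^ l)) * S t)
    (hR' : ∀ t ≥ (0:ℝ), deriv R t =
      k3 * R t * (1 - m1 * (S t + η * R t))
        + (c * a3 ^ l / (a3 ^ l + E t ^ l)) * S t)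
    (hE' : ∀ t ≥ (0:ℝ), deriv E t = p * r * F t - μ * E t)
    (hF' : ∀ t ≥ (0:ℝ), deriv F t = k2 * F t * (1 - m2 * F t) - α * (S t + R t) * F t)
    (hS0 : 0 ≤ S 0) (hR0 : 0 ≤ R 0) (hE0 : 0 ≤ E 0) (hF0 : 0 ≤ F 0)
    (hη1 : η ≤ 1)
    (hSnonneg : ∀ t ≥ (0:ℝ), 0 ≤ S t) (hRnonneg : ∀ t ≥ (0:ℝ), 0 ≤ R t)
    (hEnonneg : ∀ t ≥ (0:ℝ), 0 ≤ E t)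
    (hinit : S 0 + η * R 0 ≤ 1 / m1) :
    (∀ t ≥ (0:ℝ), S t + η * R t ≤ 1 / m1) ∧
      (∃ M : ℝ, ∀ t ≥ (0:ℝ), S t ≤ M ∧ R t ≤ M) := by
  have key : ∀ t ≥ (0:ℝ), S t + η * R t ≤ 1 / m1 := by
    intro t ht
    -- it suffices to show `S t + η R t ≤ 1/m1 + δ` for every `δ > 0`
    refine le_of_forall_pos_le_add ?_
    intro δ hδ
    have hexp : (0:ℝ) < Real.exp t := Real.exp_pos t
    set ε : ℝ := δ / Real.exp t with hε
    have hε0 : 0 < ε := div_pos hδ hexp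
    -- fencing on [0, t] with barrier B x = 1/m1 + ε exp x
    have main : ∀ x ∈ Set.Icc (0:ℝ) t, S x + η * R x ≤ 1 / m1 + ε * Real.exp x := by
      refine image_le_of_deriv_right_lt_deriv_boundary
        (f := fun x => S x + η * R x) (f' := fun x => deriv S x + η * deriv R x)
        (B := fun x => 1 / m1 + ε * Real.exp x) (B' := fun x => ε * Real.exp x)
        ?_ ?_ ?_ ?_ ?_
      · exact ((hS.continuous.add (continuous_const.mul hR.continuous))).continuousOn
      · intro x _
        exact (((hS x).hasDerivAt).add (((hR x).hasDerivAt).const_mul η)).hasDerivWithinAt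
      · have : (0:ℝ) < ε * Real.exp 0 := by positivity
        linarith [hinit]
      · intro x
        exact ((Real.hasDerivAt_exp x).const_mul ε).const_add (1/m1)
      · intro x hx hcontact
        beta_reduce at hcontact ⊢
        have hx0 : (0:ℝ) ≤ x := hx.1
        have hSx := hSnonneg x hx0
        have hRx := hRnonneg x hx0
        have hEx := hEnonneg x hx0
        have hA : 0 ≤ k1 * E x / (a1 + E x) := by positivity
        have hC2 : 0 ≤ c * a2 ^ l / (a2 ^ l + E x ^ l) := by positivity
        have hC3 : 0 ≤ c * a3 ^ l / (a3 ^ l + E x ^ l) := by positivity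
        have hme : 0 ≤ m1 * (ε * Real.exp x) :=
          mul_nonneg hm1.le (mul_nonneg hε0.le (Real.exp_pos x).le)
        have hD : 1 - m1 * (S x + η * R x) = -(m1 * (ε * Real.exp x)) := by
          rw [hcontact]; field_simp; ring
        have hneg : 1 - m1 * (S x + η * R x) ≤ 0 := by rw [hD]; linarith
        rw [hS' x hx0, hR' x hx0]
        have h1 : (k1 * E x / (a1 + E x)) * S x * (1 - m1 * (S x + η * R x)) ≤ 0 :=
          mul_nonpos_of_nonneg_of_nonpos (mul_nonneg hA hSx) hneg
        have h2 : η * (k3 * R x * (1 - m1 * (S x + η * R x))) ≤ 0 :=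
          mul_nonpos_of_nonneg_of_nonpos hη.le
            (mul_nonpos_of_nonneg_of_nonpos (mul_nonneg hk3 hRx) hneg)
        have h3 : η * ((c * a3 ^ l / (a3 ^ l + E x ^ l)) * S x)
            ≤ (c * a3 ^ l / (a3 ^ l + E x ^ l)) * S x := by
          have h30 : 0 ≤ (c * a3 ^ l / (a3 ^ l + E x ^ l)) * S x := mul_nonneg hC3 hSx
          nlinarith [h30, hη1]
        have h4 : 0 ≤ (c * a2 ^ l / (a2 ^ l + E x ^ l)) * S x := mul_nonneg hC2 hSx
        have hpos : 0 < ε * Real.exp x := mul_pos hε0 (Real.exp_pos x)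
        linarith
    have := main t ⟨ht, le_refl t⟩
    have hεe : ε * Real.exp t = δ := by
      rw [hε, div_mul_cancel₀ δ hexp.ne']
    linarith
  refine ⟨key, ⟨max (1/m1) (1/(m1*η)), ?_⟩⟩
  intro t ht
  have h := key t ht
  have hSt := hSnonneg t ht
  have hRt := hRnonneg t ht
  have hηR2 : 0 ≤ η * R t := mul_nonneg hη.le hRt
  constructor
  · exact le_trans (by linarith) (le_max_left (1/m1) (1/(m1*η)))
  · have hηR : η * R t ≤ 1/m1 := by linarith
    have h5 : m1 * (η * R t) ≤ m1 * (1/m1) := mul_le_mul_of_nonneg_left hηR hm1.le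
    have h6 : m1 * (1/m1) = 1 := by field_simp
    have h7 : R t ≤ 1/(m1*η) := by
      rw [le_div_iff₀ (mul_pos hm1 hη)]
      linarith
    exact h7.trans (le_max_right (1/m1) (1/(m1*η)))
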